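/- For any prime p ≥ 5, any integer k ≥ 1, and any integer c, the number φ_2(p^k, c) of pairs of exceptional units of ℤ_{p^k} summing to c modulo p^k equals p^{k-1}(p-2) if c ≡ 1 (mod p); equals p^{k-1}(p-3) if c ≡ 0 (mod p) or c ≡ 2 (mod p); and equals p^{k-1}(p-4) otherwise. -/

import Mathlib

set_option linter.unreachableTactic false
set_option linter.unusedTactic false

lemma myUnit_iff {p k : ℕ} (hp : p.Prime) (hk : k ≠ 0) (x : ZMod (p ^ k)) :
    IsUnit x ↔ ZMod.castHom (dvd_pow_self p hk) (ZMod p) x ≠ 0 := by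
  haveI : NeZero (p ^ k) := ⟨pow_ne_zero k hp.ne_zero⟩
  have hx : x = (x.val : ZMod (p ^ k)) := by simp [ZMod.natCast_val, ZMod.cast_id]
  rw [hx, ZMod.isUnit_iff_coprime, map_natCast, Ne, ZMod.natCast_eq_zero_iff,
    ← hp.coprime_iff_not_dvd, Nat.coprime_pow_right_iff (Nat.pos_of_ne_zero hk),
    Nat.coprime_comm]

lemma fiber_card {p k : ℕ} (hp : p.Prime) (hk : k ≠ 0) (B : Finset (ZMod p)) :
    Nat.card {x : ZMod (p ^ k) // ZMod.castHom (dvd_pow_self p hk) (ZMod p) x ∈ B}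
      = p ^ (k - 1) * B.card := by
  haveI : NeZero (p ^ k) := ⟨pow_ne_zero k hp.ne_zero⟩
  haveI : NeZero p := ⟨hp.ne_zero⟩
  set f := ZMod.castHom (dvd_pow_self p hk) (ZMod p) with hf
  have hconst : ∀ a b : ZMod p,
      (Finset.univ.filter fun x : ZMod (p ^ k) => f x = a).card
        = (Finset.univ.filter fun x => f x = b).card := by
    intro a b
    obtain ⟨d, hd⟩ := ZMod.ringHom_surjective f (b - a)
    apply Finset.card_nbij' (fun x => x + d) (fun x => x - d) <;>
      intro x hx <;> simp only [Finset.mem_coe, Finset.mem_filter, Finset.mem_univ,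
        true_and, map_add, map_sub] at hx ⊢ <;> simp [hx, hd] <;> ring
  have hsum : ∑ a : ZMod p, (Finset.univ.filter fun x : ZMod (p ^ k) => f x = a).card
      = p ^ k := by
    rw [← Finset.card_eq_sum_card_fiberwise (fun x _ => Finset.mem_univ (f x))]
    simp [ZMod.card]
  have hm : (Finset.univ.filter fun x : ZMod (p ^ k) => f x = 0).card = p ^ (k - 1) := by
    have h1 : ∑ a : ZMod p, (Finset.univ.filter fun x : ZMod (p ^ k) => f x = a).card
        = p * (Finset.univ.filter fun x : ZMod (p ^ k) => f x = 0).card := by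
      rw [Finset.sum_congr rfl fun a _ => hconst a 0, Finset.sum_const, Finset.card_univ,
        ZMod.card, smul_eq_mul]
    have h2 : p * (Finset.univ.filter fun x : ZMod (p ^ k) => f x = 0).card
        = p * p ^ (k - 1) := by
      rw [← h1, hsum, ← pow_succ']
      congr 1
      omega
    exact Nat.eq_of_mul_eq_mul_left hp.pos h2
  rw [Nat.card_eq_fintype_card, Fintype.card_subtype,
    Finset.card_eq_sum_card_fiberwise (t := B)
      (s := Finset.univ.filter fun x : ZMod (p ^ k) => f x ∈ B)
      (fun x hx => (Finset.mem_filter.mp (Finset.mem_coe.mp hx)).2)]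
  have : ∀ a ∈ B, ((Finset.univ.filter fun x : ZMod (p ^ k) => f x ∈ B).filter
      fun x => f x = a).card = p ^ (k - 1) := by
    intro a ha
    rw [← hm, ← hconst a 0]
    congr 1
    ext x
    simp only [Finset.mem_filter, Finset.mem_univ, true_and]
    constructor
    · rintro ⟨-, h⟩; exact h
    · rintro h; exact ⟨h ▸ ha, h⟩
  rw [Finset.sum_congr rfl this, Finset.sum_const, smul_eq_mul, mul_comm]

/-- `phi k n c` is the number of `k`-tuples of exceptional units of `ℤ/nℤ`
(i.e. elements `u` with both `u` and `1 - u` units) summing to `c` modulo `n`. -/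
noncomputable def phi (k n : ℕ) (c : ℤ) : ℕ :=
  Nat.card {x : Fin k → ZMod n //
    (∀ i, IsUnit (x i) ∧ IsUnit (1 - x i)) ∧ ∑ i, x i = (c : ZMod n)}

theorem phi_two_prime_pow (p : ℕ) (hp : p.Prime) (hp5 : 5 ≤ p) (k : ℕ)
    (hk : 1 ≤ k) (c : ℤ) :
    phi 2 (p ^ k) c =
      if c % p = 1 then p ^ (k - 1) * (p - 2)
      else if c % p = 0 ∨ c % p = 2 then p ^ (k - 1) * (p - 3)
      else p ^ (k - 1) * (p - 4) := by
  have hk' : k ≠ 0 := by omega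
  haveI : NeZero (p ^ k) := ⟨pow_ne_zero k hp.ne_zero⟩
  haveI : NeZero p := ⟨hp.ne_zero⟩
  set f := ZMod.castHom (dvd_pow_self p hk') (ZMod p) with hf
  set cb : ZMod p := (c : ZMod p) with hcb
  set T : Finset (ZMod p) := {0, 1, cb, cb - 1} with hT
  -- step 1: rewrite phi as a count over a subtype of ZMod (p^k)
  have e1 : {x : Fin 2 → ZMod (p ^ k) //
        (∀ i, IsUnit (x i) ∧ IsUnit (1 - x i)) ∧ ∑ i, x i = (c : ZMod (p ^ k))}
      ≃ {y : ZMod (p ^ k) // IsUnit y ∧ IsUnit (1 - y) ∧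
          IsUnit ((c : ZMod (p ^ k)) - y) ∧ IsUnit (1 - ((c : ZMod (p ^ k)) - y))} := by
    refine ⟨fun x => ⟨x.1 0, ?_⟩, fun y => ⟨![y.1, (c : ZMod (p ^ k)) - y.1], ?_⟩, ?_, ?_⟩
    · obtain ⟨x, hx, hs⟩ := x
      rw [Fin.sum_univ_two] at hs
      have h1 : x 1 = (c : ZMod (p ^ k)) - x 0 := by rw [← hs]; ring
      exact ⟨(hx 0).1, (hx 0).2, h1 ▸ (hx 1).1, h1 ▸ (hx 1).2⟩
    · obtain ⟨y, h1, h2, h3, h4⟩ := y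
      refine ⟨fun i => ?_, by rw [Fin.sum_univ_two]; simp⟩
      fin_cases i <;> simp [h1, h2, h3, h4]
    · rintro ⟨x, hx, hs⟩
      rw [Fin.sum_univ_two] at hs
      apply Subtype.ext
      funext i
      fin_cases i
      · rfl
      · show (c : ZMod (p ^ k)) - x 0 = x 1
        rw [← hs]; ring
    · rintro ⟨y, hy⟩; rfl
  have hcond : ∀ y : ZMod (p ^ k),
      (IsUnit y ∧ IsUnit (1 - y) ∧ IsUnit ((c : ZMod (p ^ k)) - y) ∧
        IsUnit (1 - ((c : ZMod (p ^ k)) - y))) ↔ f y ∈ Tᶜ := by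
    intro y
    simp only [myUnit_iff hp hk', ← hf, map_sub, map_one, map_intCast, ← hcb,
      Finset.mem_compl, hT, Finset.mem_insert, Finset.mem_singleton, not_or]
    constructor
    · rintro ⟨h1, h2, h3, h4⟩
      refine ⟨h1, fun e => h2 (by rw [e]; ring), fun e => h3 (by rw [e]; ring),
        fun e => h4 (by rw [e]; ring)⟩
    · rintro ⟨h1, h2, h3, h4⟩
      refine ⟨h1, fun e => h2 ?_, fun e => h3 ?_, fun e => h4 ?_⟩
      · have := sub_eq_zero.mp e; linear_combination -this
      · have := sub_eq_zero.mp e; linear_combination -this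
      · have := sub_eq_zero.mp e; linear_combination this
  have key : phi 2 (p ^ k) c = p ^ (k - 1) * (p - T.card) := by
    rw [phi, Nat.card_congr (e1.trans (Equiv.subtypeEquivRight hcond)),
      fiber_card hp hk' Tᶜ, Finset.card_compl, ZMod.card]
  haveI : Fact (1 < p) := ⟨by omega⟩
  have hne : ∀ a b : ℤ, 0 ≤ a → a < p → 0 ≤ b → b < p → a ≠ b →
      ((a : ZMod p) ≠ (b : ZMod p)) := by
    intro a b ha ha' hb hb' hab
    rw [Ne, ZMod.intCast_eq_intCast_iff', Int.emod_eq_of_lt ha ha', Int.emod_eq_of_lt hb hb']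
    exact hab
  have h01 : (0 : ZMod p) ≠ 1 := zero_ne_one
  have h02 : (0 : ZMod p) ≠ 2 := by
    have := hne 0 2 (by omega) (by omega) (by omega) (by omega) (by omega)
    push_cast at this; exact this
  have h12 : (1 : ZMod p) ≠ 2 := by
    have := hne 1 2 (by omega) (by omega) (by omega) (by omega) (by omega)
    push_cast at this; exact this
  have h0m1 : (0 : ZMod p) ≠ -1 := fun e => h01 (by linear_combination -e)
  have h1m1 : (1 : ZMod p) ≠ -1 := fun e => h02 (by linear_combination -e)
  have hmod : ∀ a : ℤ, 0 ≤ a → a < p → (c % p = a ↔ cb = (a : ZMod p)) := by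
    intro a ha ha'
    rw [hcb, ZMod.intCast_eq_intCast_iff', Int.emod_eq_of_lt ha ha']
  by_cases hc1 : c % p = 1
  · have hcb1 : cb = 1 := by
      have := (hmod 1 (by omega) (by omega)).mp hc1
      push_cast at this; exact this
    rw [key, if_pos hc1]
    congr 2
    have hTe : T = {0, 1} := by
      rw [hT, hcb1]
      ext x
      simp only [Finset.mem_insert, Finset.mem_singleton]
      constructor
      · rintro (h | h | h | h) <;> simp [h]
      · rintro (h | h) <;> simp [h]
    rw [hTe, Finset.card_insert_of_notMem (by simp [h01]), Finset.card_singleton]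
  · by_cases hc0 : c % p = 0
    · have hcb0 : cb = 0 := by
        have := (hmod 0 (by omega) (by omega)).mp hc0
        push_cast at this; exact this
      rw [key, if_neg hc1, if_pos (Or.inl hc0)]
      congr 2
      have hTe : T = {0, 1, -1} := by
        rw [hT, hcb0]
        ext x
        simp only [Finset.mem_insert, Finset.mem_singleton, zero_sub]
        constructor
        · rintro (h | h | h | h) <;> simp [h]
        · rintro (h | h | h) <;> simp [h]
      rw [hTe, Finset.card_insert_of_notMem (by simp [h01, h0m1]),
        Finset.card_insert_of_notMem (by simp [h1m1]), Finset.card_singleton]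
    · by_cases hc2 : c % p = 2
      · have hcb2 : cb = 2 := by
          have := (hmod 2 (by omega) (by omega)).mp hc2
          push_cast at this; exact this
        rw [key, if_neg hc1, if_pos (Or.inr hc2)]
        congr 2
        have hTe : T = {0, 1, 2} := by
          rw [hT, hcb2]
          have h21 : (2 : ZMod p) - 1 = 1 := by ring
          rw [h21]
          ext x
          simp only [Finset.mem_insert, Finset.mem_singleton]
          constructor
          · rintro (h | h | h | h) <;> simp [h]
          · rintro (h | h | h) <;> simp [h]
        rw [hTe, Finset.card_insert_of_notMem (by simp [h01, h02]),
          Finset.card_insert_of_notMem (by simp [h12]), Finset.card_singleton]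
      · have hcbne0 : cb ≠ 0 := fun e => hc0 ((hmod 0 (by omega) (by omega)).mpr
          (by push_cast; exact e))
        have hcbne1 : cb ≠ 1 := fun e => hc1 ((hmod 1 (by omega) (by omega)).mpr
          (by push_cast; exact e))
        have hcbne2 : cb ≠ 2 := fun e => hc2 ((hmod 2 (by omega) (by omega)).mpr
          (by push_cast; exact e))
        rw [key, if_neg hc1, if_neg (by tauto)]
        congr 2
        rw [hT, Finset.card_insert_of_notMem (by
            simp only [Finset.mem_insert, Finset.mem_singleton, not_or]
            exact ⟨h01, fun e => hcbne0 e.symm, fun e => hcbne1 (by linear_combination -e)⟩),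
          Finset.card_insert_of_notMem (by
            simp only [Finset.mem_insert, Finset.mem_singleton, not_or]
            exact ⟨fun e => hcbne1 e.symm, fun e => hcbne2 (by linear_combination -e)⟩),
          Finset.card_insert_of_notMem (by
            simp only [Finset.mem_singleton]
            exact fun e => h01 (by linear_combination -e)),
          Finset.card_singleton]
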